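/- Let F be a totally complex number field of degree 2k with discriminant d_F, ψ its relative canonical embedding into ℂ^k, and I a fractional ideal. Then the normalized product distance of the ideal lattice ψ(I) satisfies Np(ψ(I)) := p(ψ(I))/V(ψ(I))^{1/2} ≥ 2^{k/2}/|d_F|^{1/4}. -/

import Mathlib

open NumberField
open scoped nonZeroDivisors

lemma absNorm_le_of_mem {F : Type*} [Field F] [NumberField F]
    (I : FractionalIdeal (𝓞 F)⁰ F) (hI : I ≠ 0) {x : F} (hx : x ∈ I) (hx0 : x ≠ 0) :
    FractionalIdeal.absNorm I ≤ |Algebra.norm ℚ x| := by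
  have hsp : FractionalIdeal.spanSingleton (𝓞 F)⁰ x ≤ I :=
    FractionalIdeal.spanSingleton_le_iff_mem.mpr hx
  set J := I⁻¹ * FractionalIdeal.spanSingleton (𝓞 F)⁰ x with hJ
  have hJle : J ≤ 1 := by
    calc J ≤ I⁻¹ * I := mul_right_mono (a := I⁻¹) hsp
    _ = 1 := by rw [mul_comm]; exact mul_inv_cancel₀ hI
  have hIJ : I * J = FractionalIdeal.spanSingleton (𝓞 F)⁰ x := by
    rw [hJ, ← mul_assoc, mul_inv_cancel₀ hI, one_mul]
  have hJne : J ≠ 0 := by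
    intro h
    rw [h, mul_zero] at hIJ
    exact hx0 (by simpa [FractionalIdeal.spanSingleton_eq_zero_iff] using hIJ.symm)
  obtain ⟨J₀, hJ₀⟩ := FractionalIdeal.le_one_iff_exists_coeIdeal.mp hJle
  have h1 : (1 : ℚ) ≤ FractionalIdeal.absNorm J := by
    rw [← hJ₀, FractionalIdeal.coeIdeal_absNorm]
    have hb : J₀ ≠ ⊥ := by
      rintro rfl
      rw [← hJ₀] at hJne
      simp at hJne
    exact_mod_cast Nat.one_le_iff_ne_zero.mpr
      (fun h => hb (Ideal.absNorm_eq_zero_iff.mp h))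
  have hInonneg := FractionalIdeal.absNorm_nonneg I
  calc FractionalIdeal.absNorm I = FractionalIdeal.absNorm I * 1 := (mul_one _).symm
    _ ≤ FractionalIdeal.absNorm I * FractionalIdeal.absNorm J := by
        exact mul_le_mul_of_nonneg_left h1 hInonneg
    _ = FractionalIdeal.absNorm (I * J) := (map_mul _ _ _).symm
    _ = FractionalIdeal.absNorm (FractionalIdeal.spanSingleton (𝓞 F)⁰ x) := by rw [hIJ]
    _ = |Algebra.norm ℚ x| := FractionalIdeal.absNorm_span_singleton _ _

lemma prod_abs_embeddings {F : Type*} [Field F] [NumberField F] (x : F) :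
    ∏ φ : F →+* ℂ, ‖φ x‖ = |(Algebra.norm ℚ x : ℝ)| := by
  have h := Algebra.norm_eq_prod_embeddings ℚ ℂ x
  have h2 := congr_arg (‖·‖) h
  rw [norm_prod] at h2
  have h3 : ∏ φ : F →+* ℂ, ‖φ x‖ = ∏ f : F →ₐ[ℚ] ℂ, ‖f x‖ :=
    Fintype.prod_equiv (RingHom.equivRatAlgHom F ℂ) _ _
      (fun φ => by simp [RingHom.equivRatAlgHom_apply])
  rw [h3, ← h2, eq_ratCast, Complex.norm_ratCast]

lemma prod_abs_sigma_sq {F : Type*} [Field F] [NumberField F]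
    {k : ℕ} (σ : Fin k → (F →+* ℂ))
    (hinj : Function.Injective σ)
    (hpair : ∀ φ : F →+* ℂ, (∃ i, φ = σ i) ∨ (∃ i, φ = (starRingEnd ℂ).comp (σ i)))
    (hdistinct : ∀ i j, σ i ≠ (starRingEnd ℂ).comp (σ j)) (x : F) :
    (∏ i, ‖σ i x‖) ^ 2 = |(Algebra.norm ℚ x : ℝ)| := by
  set f : Fin k ⊕ Fin k → (F →+* ℂ) :=
    Sum.elim σ (fun i => (starRingEnd ℂ).comp (σ i)) with hf
  have hfinj : Function.Injective f := by
    rintro (a | a) (b | b) h <;> simp only [hf, Sum.elim_inl, Sum.elim_inr] at h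
    · exact congr_arg Sum.inl (hinj h)
    · exact absurd h (hdistinct a b)
    · exact absurd h.symm (hdistinct b a)
    · refine congr_arg Sum.inr (hinj ?_)
      ext y
      have := congr_fun (congr_arg (fun g : F →+* ℂ => (g : F → ℂ)) h) y
      simp only [RingHom.coe_comp, Function.comp_apply] at this
      exact star_injective this
  have hfsurj : Function.Surjective f := by
    intro φ
    rcases hpair φ with ⟨i, hi⟩ | ⟨i, hi⟩
    · exact ⟨Sum.inl i, hi.symm⟩
    · exact ⟨Sum.inr i, hi.symm⟩
  have hprod : ∏ φ : F →+* ℂ, ‖φ x‖ =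
      ∏ s : Fin k ⊕ Fin k, ‖f s x‖ :=
    (Fintype.prod_equiv (Equiv.ofBijective f ⟨hfinj, hfsurj⟩)
      (fun s => ‖f s x‖) (fun φ => ‖φ x‖) (fun s => rfl)).symm
  rw [Fintype.prod_sum_type] at hprod
  simp only [hf, Sum.elim_inl, Sum.elim_inr, RingHom.coe_comp, Function.comp_apply,
    Complex.norm_conj] at hprod
  rw [← prod_abs_embeddings x, hprod, sq]

theorem normalized_product_distance_ideal_lattice {F : Type*} [Field F] [NumberField F]
    {k : ℕ} (hk : 0 < k) (hdeg : Module.finrank ℚ F = 2 * k)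
    (σ : Fin k → (F →+* ℂ))
    (hinj : Function.Injective σ)
    (hpair : ∀ φ : F →+* ℂ, (∃ i, φ = σ i) ∨ (∃ i, φ = (starRingEnd ℂ).comp (σ i)))
    (hdistinct : ∀ i j, σ i ≠ (starRingEnd ℂ).comp (σ j))
    (I : FractionalIdeal (𝓞 F)⁰ F) (hI : I ≠ 0)
    (V : ℝ)
    -- the covolume of the ideal lattice `ψ(I) ⊂ ℂ^k ≅ ℝ^{2k}`
    (hV : V = (FractionalIdeal.absNorm I : ℝ) * 2 ^ (-(k : ℤ)) *
      Real.sqrt |(NumberField.discr F : ℝ)|) :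
    sInf {r : ℝ | ∃ x ∈ I, x ≠ 0 ∧ r = ∏ i, ‖σ i x‖} / Real.sqrt V ≥
      2 ^ ((k : ℝ) / 2) / |(NumberField.discr F : ℝ)| ^ ((1 : ℝ) / 4) := by
  set d : ℝ := |(NumberField.discr F : ℝ)| with hd
  have hd0 : 0 < d := by
    rw [hd]
    simp only [abs_pos, ne_eq, Int.cast_eq_zero]
    exact NumberField.discr_ne_zero F
  set N : ℝ := (FractionalIdeal.absNorm I : ℝ) with hN
  have hN0 : 0 < N := by
    rw [hN]
    have : FractionalIdeal.absNorm I ≠ 0 := fun h => hI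
      (FractionalIdeal.absNorm_eq_zero_iff.mp h)
    have := lt_of_le_of_ne (FractionalIdeal.absNorm_nonneg I) (Ne.symm this)
    exact_mod_cast this
  have hV0 : 0 < V := by
    rw [hV]
    positivity
  -- each element of the set is at least √N
  have hlow : ∀ r ∈ {r : ℝ | ∃ x ∈ I, x ≠ 0 ∧ r = ∏ i, ‖σ i x‖},
      Real.sqrt N ≤ r := by
    rintro r ⟨x, hx, hx0, rfl⟩
    have hsq := prod_abs_sigma_sq σ hinj hpair hdistinct x
    have hle : N ≤ |(Algebra.norm ℚ x : ℝ)| := by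
      rw [hN]
      have := absNorm_le_of_mem I hI hx hx0
      rw [← Rat.cast_abs]
      exact_mod_cast this
    have hpos : 0 ≤ ∏ i, ‖σ i x‖ :=
      Finset.prod_nonneg fun i _ => norm_nonneg _
    calc Real.sqrt N ≤ Real.sqrt |(Algebra.norm ℚ x : ℝ)| := Real.sqrt_le_sqrt hle
      _ = ∏ i, ‖σ i x‖ := by
          rw [← hsq, Real.sqrt_sq hpos]
  -- the set is nonempty
  have hne : {r : ℝ | ∃ x ∈ I, x ≠ 0 ∧ r = ∏ i, ‖σ i x‖}.Nonempty := by
    obtain ⟨x, hx, hx0⟩ : ∃ x ∈ I, x ≠ (0 : F) := by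
      by_contra h
      push_neg at h
      exact hI (FractionalIdeal.eq_zero_iff.mpr h)
    exact ⟨∏ i, ‖σ i x‖, x, hx, hx0, rfl⟩
  have hinf : Real.sqrt N ≤ sInf {r : ℝ | ∃ x ∈ I, x ≠ 0 ∧ r = ∏ i, ‖σ i x‖} :=
    le_csInf hne hlow
  -- arithmetic: √N / √V = 2^(k/2) / d^(1/4)
  have hA : (0:ℝ) < 2 ^ ((k:ℝ)/2) := Real.rpow_pos_of_pos (by norm_num) _
  have hB : (0:ℝ) < d ^ ((1:ℝ)/4) := Real.rpow_pos_of_pos hd0 _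
  have hsN : (0:ℝ) < Real.sqrt N := Real.sqrt_pos.mpr hN0
  have hsqrtV : Real.sqrt V = Real.sqrt N * (2 ^ ((k:ℝ)/2))⁻¹ * d ^ ((1:ℝ)/4) := by
    rw [hV]
    rw [Real.sqrt_mul (by positivity), Real.sqrt_mul hN0.le]
    congr 1
    · congr 1
      rw [show ((2:ℝ) ^ (-(k : ℤ))) = (2:ℝ) ^ ((-(k:ℤ) : ℤ) : ℝ) from
        (Real.rpow_intCast 2 _).symm]
      rw [Real.sqrt_eq_rpow, ← Real.rpow_mul (by norm_num)]
      rw [show ((-(k:ℤ) : ℤ) : ℝ) * (1/2) = -((k:ℝ)/2) by push_cast; ring]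
      rw [Real.rpow_neg (by norm_num)]
    · rw [Real.sqrt_eq_rpow, Real.sqrt_eq_rpow, ← Real.rpow_mul hd0.le]
      norm_num
  have key : Real.sqrt N / Real.sqrt V = 2 ^ ((k:ℝ)/2) / d ^ ((1:ℝ)/4) := by
    rw [hsqrtV]
    field_simp
  rw [ge_iff_le, ← key]
  gcongr
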